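/- The Motzkin numbers M_n, defined by M_0 = 1 and M_{n+1} = M_n + sum_{k=0}^{n-1} M_k * M_{n-1-k}, count Motzkin paths: M_n equals the number of sequences of n steps from {U, D, F} (U=+1, D=-1, F=0) whose partial sums are all nonnegative and whose total sum is 0. -/

import Mathlib

/-- A Motzkin path as a list of steps. -/
def Mok (l : List ℤ) : Prop :=
  (∀ x ∈ l, x = -1 ∨ x = 0 ∨ x = 1) ∧ (∀ k, 0 ≤ (l.take k).sum) ∧ l.sum = 0

/-- Motzkin paths of length `n`. -/
abbrev MP (n : ℕ) := {l : List ℤ // l.length = n ∧ Mok l}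

instance MP_finite (n : ℕ) : Finite (MP n) := by
  have hf : Function.Injective (fun (l : MP n) (i : Fin n) =>
      (⟨l.1[(i : ℕ)]'(l.2.1.symm ▸ i.2), by
        have h' : (i : ℕ) < l.1.length := l.2.1.symm ▸ i.2
        rcases l.2.2.1 _ (List.getElem_mem h') with h | h | h <;>
          simp [h]⟩ : ({-1, 0, 1} : Finset ℤ))) := by
    intro a b h
    apply Subtype.ext
    apply List.ext_getElem (by rw [a.2.1, b.2.1])
    intro i h1 h2
    have := congrFun h ⟨i, by have := a.2.1; omega⟩
    simpa using congrArg Subtype.val this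
  exact Finite.of_injective _ hf

/-- The number of Motzkin paths of length `n`. -/
noncomputable def cnt (n : ℕ) : ℕ := Nat.card (MP n)

lemma cnt_zero : cnt 0 = 1 := by
  have : Unique (MP 0) := by
    refine ⟨⟨⟨[], rfl, by simp [Mok]⟩⟩, ?_⟩
    rintro ⟨l, hl, _⟩
    apply Subtype.ext
    simpa using List.eq_nil_of_length_eq_zero hl
  simp [cnt, Nat.card_unique]

lemma mok_cons_zero {l : List ℤ} (h : Mok l) : Mok ((0 : ℤ) :: l) := by
  obtain ⟨h1, h2, h3⟩ := h
  refine ⟨?_, ?_, by simp [h3]⟩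
  · intro x hx
    rcases List.mem_cons.1 hx with rfl | hx
    · tauto
    · exact h1 x hx
  · intro k
    cases k with
    | zero => simp
    | succ k => simpa using h2 k

lemma take_cons_neg_one (b : List ℤ) (hb : ∀ k, 0 ≤ (b.take k).sum) (m : ℕ) :
    -1 ≤ (((-1 : ℤ) :: b).take m).sum := by
  cases m with
  | zero => simp
  | succ m =>
    rw [List.take_succ_cons, List.sum_cons]
    linarith [hb m]

lemma mok_glue {a b : List ℤ} (ha : Mok a) (hb : Mok b) :
    Mok ((1 : ℤ) :: (a ++ (-1 : ℤ) :: b)) := by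
  obtain ⟨ha1, ha2, ha3⟩ := ha
  obtain ⟨hb1, hb2, hb3⟩ := hb
  refine ⟨?_, ?_, by simp [ha3, hb3]⟩
  · intro x hx
    rcases List.mem_cons.1 hx with rfl | hx
    · tauto
    rcases List.mem_append.1 hx with hx | hx
    · exact ha1 x hx
    rcases List.mem_cons.1 hx with rfl | hx
    · tauto
    · exact hb1 x hx
  · intro k
    cases k with
    | zero => simp
    | succ k =>
      rw [List.take_succ_cons, List.sum_cons]
      rw [List.take_append, List.sum_append]
      have h1 : 0 ≤ (a.take k).sum := ha2 k
      have h2 := take_cons_neg_one b hb2 (k - a.length)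
      linarith

/-- the sum of the prefix of length `|a|+1` of `a ++ -1 :: b` is `a.sum - 1`. -/
lemma glue_take_len (a b : List ℤ) :
    ((a ++ (-1 : ℤ) :: b).take (a.length + 1)).sum = a.sum - 1 := by
  rw [List.take_append, List.take_of_length_le (by omega)]
  have h : a.length + 1 - a.length = 1 := by omega
  rw [h]
  simp
  ring

lemma glue_len_eq {a b a' b' : List ℤ} (ha : Mok a) (ha' : Mok a')
    (h : a ++ (-1 : ℤ) :: b = a' ++ (-1 : ℤ) :: b') : a.length = a'.length := by
  by_contra hne
  rcases Nat.lt_or_ge a.length a'.length with hlt | hge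
  · have h1 : ((a ++ (-1 : ℤ) :: b).take (a.length + 1)).sum = a.sum - 1 := glue_take_len a b
    rw [h, List.take_append,
      Nat.sub_eq_zero_of_le (by omega), List.take_zero, List.append_nil] at h1
    have h2 := ha'.2.1 (a.length + 1)
    have h3 := ha.2.2
    omega
  · have hlt : a'.length < a.length := by omega
    have h1 : ((a' ++ (-1 : ℤ) :: b').take (a'.length + 1)).sum = a'.sum - 1 :=
      glue_take_len a' b'
    rw [← h, List.take_append,
      Nat.sub_eq_zero_of_le (by omega), List.take_zero, List.append_nil] at h1
    have h2 := ha.2.1 (a'.length + 1)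
    have h3 := ha'.2.2
    omega

/-- The first-return gluing map. -/
def glue (n : ℕ) : MP n ⊕ (Σ k : Fin n, MP (k : ℕ) × MP (n - 1 - (k : ℕ))) → MP (n + 1)
  | Sum.inl ⟨l, hlen, hm⟩ => ⟨(0 : ℤ) :: l, by simp [hlen], mok_cons_zero hm⟩
  | Sum.inr ⟨k, ⟨a, halen, ham⟩, ⟨b, hblen, hbm⟩⟩ =>
      ⟨(1 : ℤ) :: (a ++ (-1 : ℤ) :: b), by
        simp only [List.length_cons, List.length_append, halen, hblen]
        have := k.2
        omega, mok_glue ham hbm⟩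

lemma glue_bijective (n : ℕ) : Function.Bijective (glue n) := by
  constructor
  · rintro (⟨l, hlen, hm⟩ | ⟨k, ⟨a, halen, ham⟩, ⟨b, hblen, hbm⟩⟩)
        (⟨l', hlen', hm'⟩ | ⟨k', ⟨a', halen', ham'⟩, ⟨b', hblen', hbm'⟩⟩) h
    · have h' := congrArg Subtype.val h
      simp only [glue, List.cons.injEq] at h'
      exact congrArg Sum.inl (Subtype.ext h'.2)
    · have h' := congrArg Subtype.val h
      simp only [glue, List.cons.injEq] at h'
      exact absurd h'.1 (by norm_num)
    · have h' := congrArg Subtype.val h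
      simp only [glue, List.cons.injEq] at h'
      exact absurd h'.1 (by norm_num)
    · have h' := congrArg Subtype.val h
      simp only [glue, List.cons.injEq] at h'
      obtain ⟨-, h'⟩ := h'
      have hlen2 : a.length = a'.length := glue_len_eq ham ham' h'
      have hk : k = k' := Fin.ext (by omega)
      subst hk
      obtain ⟨rfl, h2⟩ := List.append_inj h' hlen2
      have hb2 : b = b' := by simpa using h2
      subst hb2
      rfl
  · rintro ⟨l, hlen, hm⟩
    match l, hlen with
    | x :: t, hlen =>
    have htlen : t.length = n := by simpa using hlen
    have hx1 : (0 : ℤ) ≤ x := by simpa using hm.2.1 1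
    have hx2 := hm.1 x List.mem_cons_self
    have hsum : x + t.sum = 0 := by simpa using hm.2.2
    have hmemt : ∀ y ∈ t, y = -1 ∨ y = 0 ∨ y = 1 := fun y hy =>
      hm.1 y (List.mem_cons_of_mem x hy)
    have htake : ∀ k, 0 ≤ x + (t.take k).sum := by
      intro k
      simpa using hm.2.1 (k + 1)
    rcases hx2 with rfl | rfl | rfl
    · exact absurd hx1 (by norm_num)
    · -- flat first step
      refine ⟨Sum.inl ⟨t, htlen, hmemt, ?_, by omega⟩, ?_⟩
      · intro k; simpa using htake k
      · apply Subtype.ext; simp [glue]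
    · -- up first step
      have hts : t.sum = -1 := by omega
      have hex : ∃ j, (t.take (j + 1)).sum < 0 := by
        have htne : t ≠ [] := by
          intro h; rw [h] at hts; simp at hts
        refine ⟨t.length - 1, ?_⟩
        have hl1 : t.length - 1 + 1 = t.length := by
          have := List.length_pos_iff.2 htne; omega
        rw [hl1, List.take_length, hts]; norm_num
      set j := Nat.find hex with hjdef
      have hj : (t.take (j + 1)).sum < 0 := Nat.find_spec hex
      have hmin : ∀ i, i < j → 0 ≤ (t.take (i + 1)).sum := by
        intro i hi
        have := Nat.find_min hex hi
        omega
      have hpre : ∀ m, m ≤ j → 0 ≤ (t.take m).sum := by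
        intro m hm'
        cases m with
        | zero => simp
        | succ i => exact hmin i (by omega)
      have hjlen : j < t.length := by
        by_contra hge
        push_neg at hge
        have h1 : t.take j = t := List.take_of_length_le hge
        have h2 : 0 ≤ t.sum := by
          have := hpre j le_rfl; rwa [h1] at this
        omega
      have hsucc : (t.take (j + 1)).sum = (t.take j).sum + t[j] :=
        List.sum_take_succ t j hjlen
      have hjel := hmemt t[j] (List.getElem_mem hjlen)
      have htj0 : 0 ≤ (t.take j).sum := hpre j le_rfl
      have htj : (t.take j).sum = 0 ∧ t[j] = -1 := by
        rcases hjel with h | h | h <;> constructor <;> omega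
      have hdecomp : t = t.take j ++ (-1 : ℤ) :: t.drop (j + 1) := by
        conv_lhs => rw [← List.take_append_drop j t]
        rw [List.drop_eq_getElem_cons hjlen, htj.2]
      have hajlen : (t.take j).length = j := by
        rw [List.length_take]; omega
      have hbsum : (t.drop (j + 1)).sum = 0 := by
        have h5 := hts
        rw [hdecomp, List.sum_append, List.sum_cons, htj.1] at h5
        omega
      have hbtake : ∀ k, 0 ≤ ((t.drop (j + 1)).take k).sum := by
        intro k
        have h1 := htake (j + 1 + k)
        have h2 : t.take (j + 1 + k) = t.take j ++ ((-1 : ℤ) :: (t.drop (j + 1)).take k) := by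
          conv_lhs => rw [hdecomp]
          rw [List.take_append, hajlen,
            List.take_of_length_le (by rw [hajlen]; omega)]
          have h3 : j + 1 + k - j = k + 1 := by omega
          rw [h3, List.take_succ_cons]
        rw [h2, List.sum_append, List.sum_cons, htj.1] at h1
        linarith
      refine ⟨Sum.inr ⟨⟨j, by omega⟩, ⟨t.take j, hajlen, ?_, ?_, htj.1⟩,
        ⟨t.drop (j + 1), by simp only [List.length_drop, Fin.val_mk]; omega, ?_, hbtake, hbsum⟩⟩, ?_⟩
      · exact fun y hy => hmemt y (List.take_subset j t hy)
      · intro k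
        rw [List.take_take]
        exact hpre _ (min_le_right _ _)
      · exact fun y hy => hmemt y (List.drop_subset (j + 1) t hy)
      · apply Subtype.ext
        show (1 : ℤ) :: (t.take j ++ (-1 : ℤ) :: t.drop (j + 1)) = (1 : ℤ) :: t
        rw [← hdecomp]

lemma cnt_rec (n : ℕ) :
    cnt (n + 1) = cnt n + ∑ k ∈ Finset.range n, cnt k * cnt (n - 1 - k) := by
  classical
  have hcard := Nat.card_eq_of_bijective (glue n) (glue_bijective n)
  have hsig : Nat.card (Σ k : Fin n, MP (k : ℕ) × MP (n - 1 - (k : ℕ))) =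
      ∑ k : Fin n, cnt (k : ℕ) * cnt (n - 1 - (k : ℕ)) := by
    letI : ∀ k : Fin n, Fintype (MP (k : ℕ) × MP (n - 1 - (k : ℕ))) :=
      fun k => Fintype.ofFinite _
    rw [Nat.card_eq_fintype_card, Fintype.card_sigma]
    congr 1
    funext k
    rw [← Nat.card_eq_fintype_card, Nat.card_prod]
    rfl
  rw [cnt, ← hcard, Nat.card_sum, hsig,
    ← Fin.sum_univ_eq_sum_range fun k => cnt k * cnt (n - 1 - k)]
  rfl

lemma M_eq_cnt (M : ℕ → ℕ) (h0 : M 0 = 1)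
    (hrec : ∀ n, M (n + 1) = M n + ∑ k ∈ Finset.range n, M k * M (n - 1 - k)) :
    ∀ n, M n = cnt n := by
  intro n
  induction n using Nat.strong_induction_on with
  | _ n ih =>
    match n with
    | 0 => rw [h0, cnt_zero]
    | n + 1 =>
      rw [hrec n, cnt_rec n, ih n (by omega)]
      congr 1
      apply Finset.sum_congr rfl
      intro k hk
      have hk' := Finset.mem_range.1 hk
      rw [ih k (by omega), ih (n - 1 - k) (by omega)]

/-- Conversion from step functions to step lists. -/
def toMP (n : ℕ) (s : {s : Fin n → ℤ //
      (∀ i, s i = -1 ∨ s i = 0 ∨ s i = 1) ∧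
      (∀ m : ℕ, 0 ≤ ∑ i ∈ Finset.univ.filter (fun i : Fin n => (i : ℕ) < m), s i) ∧
      (∑ i, s i) = 0}) : MP n :=
  ⟨List.ofFn s.1, by simp, by
    obtain ⟨hs1, hs2, hs3⟩ := s.2
    refine ⟨?_, ?_, ?_⟩
    · intro x hx
      obtain ⟨i, rfl⟩ := List.mem_ofFn.1 hx
      exact hs1 i
    · intro k
      rw [List.sum_take_ofFn]
      exact hs2 k
    · rw [List.sum_ofFn]; exact hs3⟩

lemma toMP_bijective (n : ℕ) : Function.Bijective (toMP n) := by
  constructor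
  · intro a b h
    exact Subtype.ext (List.ofFn_injective (congrArg Subtype.val h))
  · rintro ⟨l, hlen, hm⟩
    set s : Fin n → ℤ := fun i => l[(i : ℕ)]'(by omega) with hs
    have hofn : List.ofFn s = l := by
      apply List.ext_getElem (by simp [hlen])
      intro i h1 h2
      simp [hs]
    have hPs : (∀ i, s i = -1 ∨ s i = 0 ∨ s i = 1) ∧
        (∀ m : ℕ, 0 ≤ ∑ i ∈ Finset.univ.filter (fun i : Fin n => (i : ℕ) < m), s i) ∧
        (∑ i, s i) = 0 := by
      refine ⟨fun i => hm.1 _ (List.getElem_mem _), ?_, ?_⟩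
      · intro m
        rw [← List.sum_take_ofFn, hofn]
        exact hm.2.1 m
      · rw [← List.sum_ofFn, hofn]
        exact hm.2.2
    exact ⟨⟨s, hPs⟩, Subtype.ext hofn⟩

/-- Motzkin numbers count Motzkin paths. -/
theorem motzkin_numbers_count_motzkin_paths
    (M : ℕ → ℕ) (h0 : M 0 = 1)
    (hrec : ∀ n, M (n + 1) = M n + ∑ k ∈ Finset.range n, M k * M (n - 1 - k))
    (n : ℕ) :
    M n = Nat.card {s : Fin n → ℤ //
      (∀ i, s i = -1 ∨ s i = 0 ∨ s i = 1) ∧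
      (∀ m : ℕ, 0 ≤ ∑ i ∈ Finset.univ.filter (fun i : Fin n => (i : ℕ) < m), s i) ∧
      (∑ i, s i) = 0} := by
  rw [M_eq_cnt M h0 hrec n, cnt]
  exact (Nat.card_eq_of_bijective (toMP n) (toMP_bijective n)).symm
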